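/- arXiv:1502.00890 — 2 statements merged into one kernel-verified Lean document; each statement's English description precedes it below -/
import Mathlib

section
/- Every lattice polygon in ℝ² is normal: for every lattice polygon P and every natural number t ≥ 1, each lattice point of tP is a sum of t lattice points of P. In particular every lattice point of 2P can be written as p₁ + p₂ with p₁, p₂ lattice points of P. -/
open Pointwise
/-- Cast a lattice point of ℤ² to ℝ². -/
def latCast (p : ℤ × ℤ) : ℝ × ℝ := (((p.1 : ℝ)), ((p.2 : ℝ)))

set_option maxHeartbeats 1000000

namespace LatNormal
def dZ (u v : ℤ × ℤ) : ℤ := u.1 * v.2 - u.2 * v.1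
def Bary (v0 v1 v2 : ℤ × ℤ) (s : ℝ) (x : ℝ × ℝ) : Prop :=
  ∃ a0 a1 a2 : ℝ, 0 ≤ a0 ∧ 0 ≤ a1 ∧ 0 ≤ a2 ∧ a0 + a1 + a2 = s ∧
    x.1 = a0 * (v0.1 : ℝ) + a1 * (v1.1 : ℝ) + a2 * (v2.1 : ℝ) ∧
    x.2 = a0 * (v0.2 : ℝ) + a1 * (v1.2 : ℝ) + a2 * (v2.2 : ℝ)
variable {v0 v1 v2 : ℤ × ℤ} {s : ℝ} {x : ℝ × ℝ}
lemma bary_v0 : Bary v0 v1 v2 1 (latCast v0) :=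
  ⟨1, 0, 0, by norm_num, by norm_num, by norm_num, by norm_num,
    by simp [latCast], by simp [latCast]⟩
lemma bary_v1 : Bary v0 v1 v2 1 (latCast v1) :=
  ⟨0, 1, 0, by norm_num, by norm_num, by norm_num, by norm_num,
    by simp [latCast], by simp [latCast]⟩
lemma bary_v2 : Bary v0 v1 v2 1 (latCast v2) :=
  ⟨0, 0, 1, by norm_num, by norm_num, by norm_num, by norm_num,
    by simp [latCast], by simp [latCast]⟩
lemma bary_swap01 (h : Bary v0 v1 v2 s x) : Bary v1 v0 v2 s x := by
  obtain ⟨a0, a1, a2, h0, h1, h2, hs, e1, e2⟩ := h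
  exact ⟨a1, a0, a2, h1, h0, h2, by linarith, by linarith, by linarith⟩

lemma bary_swap02 (h : Bary v0 v1 v2 s x) : Bary v2 v1 v0 s x := by
  obtain ⟨a0, a1, a2, h0, h1, h2, hs, e1, e2⟩ := h
  exact ⟨a2, a1, a0, h2, h1, h0, by linarith, by linarith, by linarith⟩

lemma dZ_swap01 {v0 v1 v2 : ℤ × ℤ} : dZ (v0 - v1) (v2 - v1) = - dZ (v1 - v0) (v2 - v0) := by
  simp only [dZ, Prod.fst_sub, Prod.snd_sub]; ring

lemma dZ_swap02 {v0 v1 v2 : ℤ × ℤ} : dZ (v1 - v2) (v0 - v2) = - dZ (v1 - v0) (v2 - v0) := by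
  simp only [dZ, Prod.fst_sub, Prod.snd_sub]; ring

lemma bary_comp {p : ℤ × ℤ} (hp : Bary v0 v1 v2 1 (latCast p))
    (hy : Bary p v1 v2 1 x) : Bary v0 v1 v2 1 x := by
  obtain ⟨c0, c1, c2, hc0, hc1, hc2, hcs, f1, f2⟩ := hp
  obtain ⟨b0, b1, b2, hb0, hb1, hb2, hbs, g1, g2⟩ := hy
  refine ⟨b0 * c0, b0 * c1 + b1, b0 * c2 + b2, by positivity, by positivity, by positivity,
    by nlinarith, ?_, ?_⟩
  · simp only [latCast] at f1
    rw [g1, f1]; ring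
  · simp only [latCast] at f2
    rw [g2, f2]; ring

lemma eq_of_casts {x y : ℤ × ℤ} (h1 : (x.1 : ℝ) = (y.1 : ℝ)) (h2 : (x.2 : ℝ) = (y.2 : ℝ)) :
    x = y := Prod.ext (by exact_mod_cast h1) (by exact_mod_cast h2)

lemma tri_base (v0 v1 v2 q : ℤ × ℤ) (he : (dZ (v1 - v0) (v2 - v0)).natAbs = 1)
    (hx : Bary v0 v1 v2 2 (latCast q)) :
    ∃ p1 p2 : ℤ × ℤ, Bary v0 v1 v2 1 (latCast p1) ∧ Bary v0 v1 v2 1 (latCast p2) ∧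
      q = p1 + p2 := by
  obtain ⟨a0, a1, a2, h0, h1, h2, hs, e1, e2⟩ := hx
  simp only [latCast] at e1 e2
  set e : ℤ := dZ (v1 - v0) (v2 - v0) with hedef
  have hee : (e : ℝ) * (e : ℝ) = 1 := by
    rcases Int.natAbs_eq_iff.mp he with h | h <;> rw [h] <;> norm_num
  have heE : (e : ℝ) = ((v1.1 : ℝ) - v0.1) * ((v2.2 : ℝ) - v0.2) -
      ((v1.2 : ℝ) - v0.2) * ((v2.1 : ℝ) - v0.1) := by
    rw [hedef]; simp only [dZ, Prod.fst_sub, Prod.snd_sub]; push_cast; ring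
  have hX : ((q.1 : ℝ) - 2 * v0.1) * ((v2.2 : ℝ) - v0.2) -
      ((q.2 : ℝ) - 2 * v0.2) * ((v2.1 : ℝ) - v0.1) =
      a1 * (((v1.1 : ℝ) - v0.1) * ((v2.2 : ℝ) - v0.2) -
        ((v1.2 : ℝ) - v0.2) * ((v2.1 : ℝ) - v0.1)) := by
    rw [e1, e2]
    have ha0 : a0 = 2 - a1 - a2 := by linarith
    rw [ha0]; ring
  have hY : ((v1.1 : ℝ) - v0.1) * ((q.2 : ℝ) - 2 * v0.2) -
      ((v1.2 : ℝ) - v0.2) * ((q.1 : ℝ) - 2 * v0.1) =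
      a2 * (((v1.1 : ℝ) - v0.1) * ((v2.2 : ℝ) - v0.2) -
        ((v1.2 : ℝ) - v0.2) * ((v2.1 : ℝ) - v0.1)) := by
    rw [e1, e2]
    have ha0 : a0 = 2 - a1 - a2 := by linarith
    rw [ha0]; ring
  set k1 : ℤ := e * dZ (q - v0 - v0) (v2 - v0) with hk1def
  set k2 : ℤ := e * dZ (v1 - v0) (q - v0 - v0) with hk2def
  have hk1c : (k1 : ℝ) = (e : ℝ) * (((q.1 : ℝ) - 2 * v0.1) * ((v2.2 : ℝ) - v0.2) -
      ((q.2 : ℝ) - 2 * v0.2) * ((v2.1 : ℝ) - v0.1)) := by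
    rw [hk1def]; simp only [dZ, Prod.fst_sub, Prod.snd_sub]; push_cast; ring
  have hk2c : (k2 : ℝ) = (e : ℝ) * (((v1.1 : ℝ) - v0.1) * ((q.2 : ℝ) - 2 * v0.2) -
      ((v1.2 : ℝ) - v0.2) * ((q.1 : ℝ) - 2 * v0.1)) := by
    rw [hk2def]; simp only [dZ, Prod.fst_sub, Prod.snd_sub]; push_cast; ring
  have ha1 : a1 = (k1 : ℝ) := by
    rw [hk1c, hX, ← heE]; linear_combination -a1 * hee
  have ha2 : a2 = (k2 : ℝ) := by
    rw [hk2c, hY, ← heE]; linear_combination -a2 * hee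
  have hkey1 : (0 : ℤ) ≤ k1 := by exact_mod_cast ha1 ▸ h1
  have hkey2 : (0 : ℤ) ≤ k2 := by exact_mod_cast ha2 ▸ h2
  have hup : k1 + k2 ≤ 2 := by
    have : (k1 : ℝ) + (k2 : ℝ) ≤ 2 := by rw [← ha1, ← ha2]; linarith
    exact_mod_cast this
  have hk1up : k1 ≤ 2 := by omega
  have hk2up : k2 ≤ 2 := by omega
  clear hk1c hk2c hX hY hk1def hk2def hee heE
  interval_cases k1 <;> interval_cases k2 <;>
    [ (exact ⟨v0, v0, bary_v0, bary_v0, by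
        push_cast at ha1 ha2
        have ha0 : a0 = 2 - a1 - a2 := by linarith
        rw [ha0, ha1, ha2] at e1 e2
        exact eq_of_casts (by simp [Prod.fst_add]; push_cast; linarith)
          (by simp [Prod.snd_add]; push_cast; linarith)⟩);
      (exact ⟨v0, v2, bary_v0, bary_v2, by
        push_cast at ha1 ha2
        have ha0 : a0 = 2 - a1 - a2 := by linarith
        rw [ha0, ha1, ha2] at e1 e2
        exact eq_of_casts (by simp [Prod.fst_add]; push_cast; linarith)
          (by simp [Prod.snd_add]; push_cast; linarith)⟩);
      (exact ⟨v2, v2, bary_v2, bary_v2, by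
        push_cast at ha1 ha2
        have ha0 : a0 = 2 - a1 - a2 := by linarith
        rw [ha0, ha1, ha2] at e1 e2
        exact eq_of_casts (by simp [Prod.fst_add]; push_cast; linarith)
          (by simp [Prod.snd_add]; push_cast; linarith)⟩);
      (exact ⟨v0, v1, bary_v0, bary_v1, by
        push_cast at ha1 ha2
        have ha0 : a0 = 2 - a1 - a2 := by linarith
        rw [ha0, ha1, ha2] at e1 e2
        exact eq_of_casts (by simp [Prod.fst_add]; push_cast; linarith)
          (by simp [Prod.snd_add]; push_cast; linarith)⟩);
      (exact ⟨v1, v2, bary_v1, bary_v2, by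
        push_cast at ha1 ha2
        have ha0 : a0 = 2 - a1 - a2 := by linarith
        rw [ha0, ha1, ha2] at e1 e2
        exact eq_of_casts (by simp [Prod.fst_add]; push_cast; linarith)
          (by simp [Prod.snd_add]; push_cast; linarith)⟩);
      (omega);
      (exact ⟨v1, v1, bary_v1, bary_v1, by
        push_cast at ha1 ha2
        have ha0 : a0 = 2 - a1 - a2 := by linarith
        rw [ha0, ha1, ha2] at e1 e2
        exact eq_of_casts (by simp [Prod.fst_add]; push_cast; linarith)
          (by simp [Prod.snd_add]; push_cast; linarith)⟩);
      (omega);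
      (omega)]

lemma pick3 (a0 a1 a2 c0 c1 c2 : ℝ) (ha0 : 0 ≤ a0) (ha1 : 0 ≤ a1) (ha2 : 0 ≤ a2)
    (hc0 : 0 ≤ c0) (hc1 : 0 ≤ c1) (hc2 : 0 ≤ c2) (hcs : c0 + c1 + c2 = 1) :
    (0 < c0 ∧ a0 * c1 ≤ a1 * c0 ∧ a0 * c2 ≤ a2 * c0) ∨
    (0 < c1 ∧ a1 * c0 ≤ a0 * c1 ∧ a1 * c2 ≤ a2 * c1) ∨
    (0 < c2 ∧ a2 * c0 ≤ a0 * c2 ∧ a2 * c1 ≤ a1 * c2) := by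
  rcases eq_or_lt_of_le hc0 with h0 | h0
  · rcases eq_or_lt_of_le hc1 with h1 | h1
    · right; right
      refine ⟨by linarith, by nlinarith, by nlinarith⟩
    · by_cases h12 : a1 * c2 ≤ a2 * c1
      · right; left; exact ⟨h1, by nlinarith, h12⟩
      · push_neg at h12
        have hc2p : 0 < c2 := by
          rcases eq_or_lt_of_le hc2 with h2 | h2
          · exfalso; nlinarith
          · exact h2
        right; right; exact ⟨hc2p, by nlinarith, le_of_lt h12⟩
  · by_cases hA : a0 * c1 ≤ a1 * c0
    · by_cases hB : a0 * c2 ≤ a2 * c0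
      · left; exact ⟨h0, hA, hB⟩
      · push_neg at hB
        have ha0p : 0 < a0 := by nlinarith
        have hc2p : 0 < c2 := by nlinarith
        right; right
        refine ⟨hc2p, le_of_lt hB, by nlinarith⟩
    · push_neg at hA
      have ha0p : 0 < a0 := by nlinarith
      have hc1p : 0 < c1 := by nlinarith
      by_cases hC : a1 * c2 ≤ a2 * c1
      · right; left; exact ⟨hc1p, le_of_lt hA, hC⟩
      · push_neg at hC
        have ha1p : 0 < a1 := by nlinarith
        have hc2p : 0 < c2 := by nlinarith
        right; right
        refine ⟨hc2p, by nlinarith, le_of_lt hC⟩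

lemma exists_nonrep (w1 w2 : ℤ × ℤ) (h : 2 ≤ (dZ w1 w2).natAbs) :
    ∃ z : ℤ × ℤ, ∀ m n : ℤ,
      ¬(z.1 = m * w1.1 + n * w2.1 ∧ z.2 = m * w1.2 + n * w2.2) := by
  by_contra hcon
  push_neg at hcon
  obtain ⟨a, b, ha1, ha2⟩ := hcon (1, 0)
  obtain ⟨c, d, hc1, hc2⟩ := hcon (0, 1)
  simp only at ha1 ha2 hc1 hc2
  have key : dZ w1 w2 * (a * d - b * c) = 1 := by
    simp only [dZ]
    linear_combination (-(c * w1.2 + d * w2.2)) * ha1 - hc2 + (c * w1.1 + d * w2.1) * ha2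
  have := congrArg Int.natAbs key
  simp only [Int.natAbs_mul] at this
  have := Nat.eq_one_of_mul_eq_one_right this
  omega


lemma step0 (D : ℕ)
    (IH : ∀ u0 u1 u2 y : ℤ × ℤ, (dZ (u1 - u0) (u2 - u0)).natAbs ≤ D →
      dZ (u1 - u0) (u2 - u0) ≠ 0 → Bary u0 u1 u2 2 (latCast y) →
      ∃ p1 p2, Bary u0 u1 u2 1 (latCast p1) ∧ Bary u0 u1 u2 1 (latCast p2) ∧ y = p1 + p2)
    (v0 v1 v2 q p : ℤ × ℤ) (c0 c1 c2 a0 a1 a2 : ℝ)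
    (hd : (dZ (v1 - v0) (v2 - v0)).natAbs ≤ D + 1)
    (hdne : dZ (v1 - v0) (v2 - v0) ≠ 0)
    (hc0 : 0 < c0) (hc1 : 0 ≤ c1) (hc2 : 0 ≤ c2) (hcs : c0 + c1 + c2 = 1) (hc0' : c0 < 1)
    (hp1 : (p.1 : ℝ) = c0 * (v0.1 : ℝ) + c1 * (v1.1 : ℝ) + c2 * (v2.1 : ℝ))
    (hp2 : (p.2 : ℝ) = c0 * (v0.2 : ℝ) + c1 * (v1.2 : ℝ) + c2 * (v2.2 : ℝ))
    (ha0 : 0 ≤ a0) (ha1 : 0 ≤ a1) (ha2 : 0 ≤ a2) (has : a0 + a1 + a2 = 2)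
    (hq1 : (q.1 : ℝ) = a0 * (v0.1 : ℝ) + a1 * (v1.1 : ℝ) + a2 * (v2.1 : ℝ))
    (hq2 : (q.2 : ℝ) = a0 * (v0.2 : ℝ) + a1 * (v1.2 : ℝ) + a2 * (v2.2 : ℝ))
    (hm1 : a0 * c1 ≤ a1 * c0) (hm2 : a0 * c2 ≤ a2 * c0) :
    ∃ p1 p2, Bary v0 v1 v2 1 (latCast p1) ∧ Bary v0 v1 v2 1 (latCast p2) ∧ q = p1 + p2 := by
  have hc0e : c0 = 1 - c1 - c2 := by linarith
  have heE : ((dZ (v1 - v0) (v2 - v0) : ℤ) : ℝ) = ((v1.1 : ℝ) - v0.1) * ((v2.2 : ℝ) - v0.2) -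
      ((v1.2 : ℝ) - v0.2) * ((v2.1 : ℝ) - v0.1) := by
    simp only [dZ, Prod.fst_sub, Prod.snd_sub]; push_cast; ring
  have hde : ((dZ (v1 - p) (v2 - p) : ℤ) : ℝ) = c0 * ((dZ (v1 - v0) (v2 - v0) : ℤ) : ℝ) := by
    rw [heE]
    simp only [dZ, Prod.fst_sub, Prod.snd_sub]
    push_cast
    rw [hp1, hp2, hc0e]
    ring
  have heR : ((dZ (v1 - v0) (v2 - v0) : ℤ) : ℝ) ≠ 0 := Int.cast_ne_zero.mpr hdne
  have hd0ne : dZ (v1 - p) (v2 - p) ≠ 0 := by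
    intro h
    rw [h] at hde
    simp only [Int.cast_zero] at hde
    exact (mul_ne_zero (ne_of_gt hc0) heR) hde.symm
  have hd0le : (dZ (v1 - p) (v2 - p)).natAbs ≤ D := by
    have habs : |((dZ (v1 - p) (v2 - p) : ℤ) : ℝ)| < |((dZ (v1 - v0) (v2 - v0) : ℤ) : ℝ)| := by
      rw [hde, abs_mul, abs_of_pos hc0]
      have : 0 < |((dZ (v1 - v0) (v2 - v0) : ℤ) : ℝ)| := abs_pos.mpr heR
      nlinarith
    rw [← Int.cast_abs, ← Int.cast_abs] at habs
    have habs' : |dZ (v1 - p) (v2 - p)| < |dZ (v1 - v0) (v2 - v0)| := by exact_mod_cast habs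
    rw [Int.abs_eq_natAbs, Int.abs_eq_natAbs] at habs'
    have : (dZ (v1 - p) (v2 - p)).natAbs < (dZ (v1 - v0) (v2 - v0)).natAbs := by
      exact_mod_cast habs'
    omega
  set s : ℝ := a0 / c0 with hsdef
  have hs0 : 0 ≤ s := div_nonneg ha0 (le_of_lt hc0)
  have hsc0 : s * c0 = a0 := div_mul_cancel₀ a0 (ne_of_gt hc0)
  have hb1 : 0 ≤ a1 - s * c1 := by
    rw [hsdef, div_mul_eq_mul_div, sub_nonneg, div_le_iff₀ hc0]
    nlinarith
  have hb2 : 0 ≤ a2 - s * c2 := by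
    rw [hsdef, div_mul_eq_mul_div, sub_nonneg, div_le_iff₀ hc0]
    nlinarith
  have hbsum : s + (a1 - s * c1) + (a2 - s * c2) = 2 := by
    have h' : s * (1 - c1 - c2) = a0 := by rw [← hc0e]; exact hsc0
    have h'' : s - s * c1 - s * c2 = a0 := by linear_combination h'
    linarith
  have hBp : Bary p v1 v2 2 (latCast q) := by
    refine ⟨s, a1 - s * c1, a2 - s * c2, hs0, hb1, hb2, hbsum, ?_, ?_⟩
    · show (q.1 : ℝ) = _
      rw [hp1, hsdef]
      field_simp
      linear_combination c0 * hq1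
    · show (q.2 : ℝ) = _
      rw [hp2, hsdef]
      field_simp
      linear_combination c0 * hq2
  obtain ⟨p1, p2, hB1, hB2, hsum⟩ := IH p v1 v2 q hd0le hd0ne hBp
  have hpB : Bary v0 v1 v2 1 (latCast p) :=
    ⟨c0, c1, c2, le_of_lt hc0, hc1, hc2, hcs, hp1, hp2⟩
  exact ⟨p1, p2, bary_comp hpB hB1, bary_comp hpB hB2, hsum⟩


lemma tri (D : ℕ) : ∀ v0 v1 v2 q : ℤ × ℤ, (dZ (v1 - v0) (v2 - v0)).natAbs ≤ D →
    dZ (v1 - v0) (v2 - v0) ≠ 0 → Bary v0 v1 v2 2 (latCast q) →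
    ∃ p1 p2, Bary v0 v1 v2 1 (latCast p1) ∧ Bary v0 v1 v2 1 (latCast p2) ∧ q = p1 + p2 := by
  induction D with
  | zero =>
    intro v0 v1 v2 q hle hne _
    exact absurd (Int.natAbs_eq_zero.mp (Nat.le_zero.mp hle)) hne
  | succ D IH =>
    intro v0 v1 v2 q hle hne hB
    by_cases hbase : (dZ (v1 - v0) (v2 - v0)).natAbs = 1
    · exact tri_base v0 v1 v2 q hbase hB
    · have hge2 : 2 ≤ (dZ (v1 - v0) (v2 - v0)).natAbs := by
        have := Int.natAbs_ne_zero.mpr hne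
        omega
      obtain ⟨z, hz⟩ := exists_nonrep (v1 - v0) (v2 - v0) hge2
      have heR : ((dZ (v1 - v0) (v2 - v0) : ℤ) : ℝ) ≠ 0 := Int.cast_ne_zero.mpr hne
      set α : ℝ := ((dZ z (v2 - v0) : ℤ) : ℝ) / ((dZ (v1 - v0) (v2 - v0) : ℤ) : ℝ) with hαdef
      set β : ℝ := ((dZ (v1 - v0) z : ℤ) : ℝ) / ((dZ (v1 - v0) (v2 - v0) : ℤ) : ℝ) with hβdef
      have hz1 : (z.1 : ℝ) = α * ((v1.1 : ℝ) - v0.1) + β * ((v2.1 : ℝ) - v0.1) := by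
        rw [hαdef, hβdef]
        field_simp
        simp only [dZ, Prod.fst_sub, Prod.snd_sub]
        push_cast
        ring
      have hz2 : (z.2 : ℝ) = α * ((v1.2 : ℝ) - v0.2) + β * ((v2.2 : ℝ) - v0.2) := by
        rw [hαdef, hβdef]
        field_simp
        simp only [dZ, Prod.fst_sub, Prod.snd_sub]
        push_cast
        ring
      set m1 : ℤ := ⌊α⌋ with hm1def
      set m2 : ℤ := ⌊β⌋ with hm2def
      have hf10 : 0 ≤ α - (m1 : ℝ) := sub_nonneg.mpr (Int.floor_le α)
      have hf20 : 0 ≤ β - (m2 : ℝ) := sub_nonneg.mpr (Int.floor_le β)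
      have hf11 : α - (m1 : ℝ) < 1 := by
        have := Int.lt_floor_add_one α; rw [← hm1def] at this; linarith
      have hf21 : β - (m2 : ℝ) < 1 := by
        have := Int.lt_floor_add_one β; rw [← hm2def] at this; linarith
      have hnz : ¬(α - (m1 : ℝ) = 0 ∧ β - (m2 : ℝ) = 0) := by
        rintro ⟨u1, u2⟩
        have hα : α = (m1 : ℝ) := by linarith
        have hβ : β = (m2 : ℝ) := by linarith
        apply hz m1 m2
        constructor
        · have h' : (z.1 : ℝ) = (m1 : ℝ) * ((v1 - v0).1 : ℝ) + (m2 : ℝ) * ((v2 - v0).1 : ℝ) := by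
            rw [hz1, hα, hβ]; simp only [Prod.fst_sub]; push_cast; ring
          exact_mod_cast h'
        · have h' : (z.2 : ℝ) = (m1 : ℝ) * ((v1 - v0).2 : ℝ) + (m2 : ℝ) * ((v2 - v0).2 : ℝ) := by
            rw [hz2, hα, hβ]; simp only [Prod.snd_sub]; push_cast; ring
          exact_mod_cast h'
      have hpos : 0 < (α - (m1 : ℝ)) + (β - (m2 : ℝ)) := by
        rcases lt_or_eq_of_le hf10 with h | h
        · linarith
        · rcases lt_or_eq_of_le hf20 with h2 | h2
          · linarith
          · exact absurd ⟨h.symm, h2.symm⟩ hnz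
      obtain ⟨p, c0, c1, c2, hc00, hc01, hc10, hc11, hc20, hc21, hcs, hp1, hp2⟩ :
          ∃ (p : ℤ × ℤ) (c0 c1 c2 : ℝ), 0 ≤ c0 ∧ c0 < 1 ∧ 0 ≤ c1 ∧ c1 < 1 ∧ 0 ≤ c2 ∧ c2 < 1 ∧
            c0 + c1 + c2 = 1 ∧ (p.1 : ℝ) = c0 * (v0.1 : ℝ) + c1 * (v1.1 : ℝ) + c2 * (v2.1 : ℝ) ∧
            (p.2 : ℝ) = c0 * (v0.2 : ℝ) + c1 * (v1.2 : ℝ) + c2 * (v2.2 : ℝ) := by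
        by_cases hcase : (α - (m1 : ℝ)) + (β - (m2 : ℝ)) ≤ 1
        · refine ⟨(v0.1 + z.1 - m1 * (v1.1 - v0.1) - m2 * (v2.1 - v0.1),
              v0.2 + z.2 - m1 * (v1.2 - v0.2) - m2 * (v2.2 - v0.2)),
            1 - (α - (m1 : ℝ)) - (β - (m2 : ℝ)), α - (m1 : ℝ), β - (m2 : ℝ),
            by linarith, by linarith, hf10, hf11, hf20, hf21, by ring, ?_, ?_⟩
          · push_cast
            rw [hz1]
            ring
          · push_cast
            rw [hz2]
            ring
        · push_neg at hcase
          refine ⟨(v1.1 + v2.1 - v0.1 - (z.1 - m1 * (v1.1 - v0.1) - m2 * (v2.1 - v0.1)),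
              v1.2 + v2.2 - v0.2 - (z.2 - m1 * (v1.2 - v0.2) - m2 * (v2.2 - v0.2))),
            (α - (m1 : ℝ)) + (β - (m2 : ℝ)) - 1, 1 - (α - (m1 : ℝ)), 1 - (β - (m2 : ℝ)),
            by linarith, by linarith, by linarith, by linarith, by linarith, by linarith,
            by ring, ?_, ?_⟩
          · push_cast
            rw [hz1]
            ring
          · push_cast
            rw [hz2]
            ring
      obtain ⟨a0, a1, a2, ha0, ha1, ha2, has, hq1, hq2⟩ := hB
      simp only [latCast] at hq1 hq2
      rcases pick3 a0 a1 a2 c0 c1 c2 ha0 ha1 ha2 hc00 hc10 hc20 hcs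
        with ⟨h, hA, hBm⟩ | ⟨h, hA, hBm⟩ | ⟨h, hA, hBm⟩
      · exact step0 D IH v0 v1 v2 q p c0 c1 c2 a0 a1 a2 hle hne h hc10 hc20 hcs hc01
          hp1 hp2 ha0 ha1 ha2 has hq1 hq2 hA hBm
      · have hd' : (dZ (v0 - v1) (v2 - v1)).natAbs ≤ D + 1 := by
          rw [dZ_swap01, Int.natAbs_neg]; exact hle
        have hne' : dZ (v0 - v1) (v2 - v1) ≠ 0 := by
          rw [dZ_swap01]; exact neg_ne_zero.mpr hne
        obtain ⟨p1, p2, hB1, hB2, hsum⟩ := step0 D IH v1 v0 v2 q p c1 c0 c2 a1 a0 a2 hd' hne'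
          h hc00 hc20 (by linarith) hc11 (by rw [hp1]; ring) (by rw [hp2]; ring)
          ha1 ha0 ha2 (by linarith) (by rw [hq1]; ring) (by rw [hq2]; ring) hA hBm
        exact ⟨p1, p2, bary_swap01 hB1, bary_swap01 hB2, hsum⟩
      · have hd' : (dZ (v1 - v2) (v0 - v2)).natAbs ≤ D + 1 := by
          rw [dZ_swap02, Int.natAbs_neg]; exact hle
        have hne' : dZ (v1 - v2) (v0 - v2) ≠ 0 := by
          rw [dZ_swap02]; exact neg_ne_zero.mpr hne
        obtain ⟨p1, p2, hB1, hB2, hsum⟩ := step0 D IH v2 v1 v0 q p c2 c1 c0 a2 a1 a0 hd' hne'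
          h hc10 hc00 (by linarith) hc21 (by rw [hp1]; ring) (by rw [hp2]; ring)
          ha2 ha1 ha0 (by linarith) (by rw [hq1]; ring) (by rw [hq2]; ring) hBm hA
        exact ⟨p1, p2, bary_swap02 hB1, bary_swap02 hB2, hsum⟩


lemma repl_sum (n : ℕ) (x : ℤ × ℤ) :
    (List.replicate n x).sum = ((n : ℤ) * x.1, (n : ℤ) * x.2) := by
  induction n with
  | zero => simp; rfl
  | succ n ih =>
    rw [List.replicate_succ, List.sum_cons, ih]
    apply Prod.ext
    · simp only [Prod.fst_add]; push_cast; ring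
    · simp only [Prod.snd_add]; push_cast; ring

lemma bary_mem {P : Set (ℝ × ℝ)} (hP : Convex ℝ P) {v0 v1 v2 : ℤ × ℤ}
    (h0 : latCast v0 ∈ P) (h1 : latCast v1 ∈ P) (h2 : latCast v2 ∈ P)
    {y : ℝ × ℝ} (hB : Bary v0 v1 v2 1 y) : y ∈ P := by
  obtain ⟨a0, a1, a2, ha0, ha1, ha2, has, e1, e2⟩ := hB
  have hy : y = a0 • latCast v0 + a1 • latCast v1 + a2 • latCast v2 := by
    apply Prod.ext
    · simp only [Prod.fst_add, Prod.smul_fst, smul_eq_mul, latCast]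
      exact e1
    · simp only [Prod.snd_add, Prod.smul_snd, smul_eq_mul, latCast]
      exact e2
  rw [hy]
  have hmem := hP.sum_mem (t := (Finset.univ : Finset (Fin 3)))
    (w := ![a0, a1, a2]) (z := ![latCast v0, latCast v1, latCast v2])
    (fun i _ => by fin_cases i <;> simpa)
    (by rw [Fin.sum_univ_three]; simpa using has)
    (fun i _ => by fin_cases i <;> simpa)
  rw [Fin.sum_univ_three] at hmem
  simpa using hmem

lemma get_weights {S : Finset (ℤ × ℤ)} {y : ℝ × ℝ}
    (hy : y ∈ convexHull ℝ (latCast '' (S : Set (ℤ × ℤ)))) :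
    ∃ (s0 s1 s2 : ℤ × ℤ) (w0 w1 w2 : ℝ), s0 ∈ S ∧ s1 ∈ S ∧ s2 ∈ S ∧
      0 ≤ w0 ∧ 0 ≤ w1 ∧ 0 ≤ w2 ∧ w0 + w1 + w2 = 1 ∧
      y = w0 • latCast s0 + w1 • latCast s1 + w2 • latCast s2 ∧
      (w2 = 0 ∨ dZ (s1 - s0) (s2 - s0) ≠ 0) := by
  rw [convexHull_eq_union] at hy
  simp only [Set.mem_iUnion] at hy
  obtain ⟨τ, hτA, hτai, hyτ⟩ := hy
  have hcard : τ.card ≤ 3 := by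
    have h1 := hτai.card_le_finrank_succ
    rw [Fintype.card_coe] at h1
    refine h1.trans ?_
    have h2 := Submodule.finrank_le (vectorSpan ℝ (Set.range (Subtype.val : {x // x ∈ τ} → ℝ × ℝ)))
    have h3 : Module.finrank ℝ (ℝ × ℝ) = 2 := by
      rw [Module.finrank_prod, Module.finrank_self]
    omega
  have hne : τ.Nonempty := by
    rcases Finset.eq_empty_or_nonempty τ with h | h
    · subst h; simp [convexHull_empty] at hyτ
    · exact h
  have hc1 := hne.card_pos
  rcases (by omega : τ.card = 1 ∨ τ.card = 2 ∨ τ.card = 3) with h | h | h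
  · obtain ⟨u, rfl⟩ := Finset.card_eq_one.mp h
    rw [Finset.coe_singleton, convexHull_singleton] at hyτ
    have hyu : y = u := Set.mem_singleton_iff.mp hyτ
    obtain ⟨s0, hs0, hu⟩ := hτA (show u ∈ (↑({u} : Finset (ℝ × ℝ)) : Set (ℝ × ℝ)) by simp)
    exact ⟨s0, s0, s0, 1, 0, 0, hs0, hs0, hs0, by norm_num, le_refl _, le_refl _, by norm_num,
      by rw [hyu, hu]; simp, Or.inl rfl⟩
  · obtain ⟨u, v, huv, rfl⟩ := Finset.card_eq_two.mp h
    rw [Finset.coe_insert, Finset.coe_singleton, convexHull_pair] at hyτ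
    obtain ⟨a, b, ha, hb, hab, hy'⟩ := hyτ
    obtain ⟨s0, hs0, hu⟩ := hτA (show u ∈ (↑({u, v} : Finset (ℝ × ℝ)) : Set (ℝ × ℝ)) by simp)
    obtain ⟨s1, hs1, hv⟩ := hτA (show v ∈ (↑({u, v} : Finset (ℝ × ℝ)) : Set (ℝ × ℝ)) by simp)
    exact ⟨s0, s1, s1, a, b, 0, hs0, hs1, hs1, ha, hb, le_refl _, by linarith,
      by rw [hu, hv, ← hy']; simp, Or.inl rfl⟩
  · obtain ⟨u, v, w, huv, huw, hvw, rfl⟩ := Finset.card_eq_three.mp h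
    have hcoe : (↑({u, v, w} : Finset (ℝ × ℝ)) : Set (ℝ × ℝ)) = {u, v, w} := by simp
    rw [hcoe] at hyτ
    rw [convexHull_insert (by exact ⟨v, by simp⟩), mem_convexJoin] at hyτ
    obtain ⟨xu, hxu, z, hz, hseg⟩ := hyτ
    rw [Set.mem_singleton_iff] at hxu
    have hyseg : y ∈ segment ℝ u z := hxu ▸ hseg
    rw [convexHull_pair] at hz
    obtain ⟨c, d, hc, hd, hcd, hz'⟩ := hz
    obtain ⟨a, b, ha, hb, hab, hy'⟩ := hyseg
    obtain ⟨s0, hs0, hu⟩ := hτA (show u ∈ (↑({u, v, w} : Finset (ℝ × ℝ)) : Set (ℝ × ℝ)) by simp)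
    obtain ⟨s1, hs1, hv⟩ := hτA (show v ∈ (↑({u, v, w} : Finset (ℝ × ℝ)) : Set (ℝ × ℝ)) by simp)
    obtain ⟨s2, hs2, hw⟩ := hτA (show w ∈ (↑({u, v, w} : Finset (ℝ × ℝ)) : Set (ℝ × ℝ)) by simp)
    refine ⟨s0, s1, s2, a, b * c, b * d, hs0, hs1, hs2, ha, by positivity, by positivity,
      by nlinarith, ?_, Or.inr ?_⟩
    · rw [hu, hv, hw, ← hy', ← hz']
      rw [smul_add, smul_smul, smul_smul, add_assoc]
    · -- affine independence gives nonzero determinant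
      intro hdet
      have hAI : AffineIndependent ℝ ![u, v, w] := by
        have hmem : ∀ i : Fin 3, ![u, v, w] i ∈ ({u, v, w} : Finset (ℝ × ℝ)) := by
          intro i; fin_cases i <;> simp
        have hinj : Function.Injective
            (fun i : Fin 3 => (⟨![u, v, w] i, hmem i⟩ : ↑({u, v, w} : Finset (ℝ × ℝ)))) := by
          intro i j hij
          simp only [Subtype.mk.injEq] at hij
          fin_cases i <;> fin_cases j <;> simp_all
        have := hτai.comp_embedding ⟨_, hinj⟩
        convert this using 1 <;> rfl
      rw [affineIndependent_iff_not_collinear_set] at hAI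
      apply hAI
      have hdet' : ((s1.1 : ℝ) - s0.1) * ((s2.2 : ℝ) - s0.2) -
          ((s1.2 : ℝ) - s0.2) * ((s2.1 : ℝ) - s0.1) = 0 := by
        have hz0 : ((dZ (s1 - s0) (s2 - s0) : ℤ) : ℝ) = 0 := by rw [hdet]; simp
        simp only [dZ, Prod.fst_sub, Prod.snd_sub] at hz0
        push_cast at hz0
        linarith
      have hu1 : u.1 = (s0.1 : ℝ) := by rw [← hu]; rfl
      have hu2 : u.2 = (s0.2 : ℝ) := by rw [← hu]; rfl
      have hv1 : v.1 = (s1.1 : ℝ) := by rw [← hv]; rfl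
      have hv2 : v.2 = (s1.2 : ℝ) := by rw [← hv]; rfl
      have hw1 : w.1 = (s2.1 : ℝ) := by rw [← hw]; rfl
      have hw2 : w.2 = (s2.2 : ℝ) := by rw [← hw]; rfl
      rw [collinear_iff_of_mem (Set.mem_insert u {v, w})]
      refine ⟨v - u, fun p hp => ?_⟩
      rcases hp with hp | hp | hp
      · exact ⟨0, by simp [hp]⟩
      · exact ⟨1, by simp [hp, vadd_eq_add]⟩
      · rw [Set.mem_singleton_iff] at hp
        subst hp
        by_cases h1 : ((s1.1 : ℝ) - s0.1) = 0
        · have h2 : ((s1.2 : ℝ) - s0.2) ≠ 0 := by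
            intro h2
            apply huv
            apply Prod.ext
            · rw [hu1, hv1]; linarith
            · rw [hu2, hv2]; linarith
          refine ⟨((p.2 : ℝ) - s0.2) / ((s1.2 : ℝ) - s0.2), ?_⟩
          have hB1 : (p.1 : ℝ) - s0.1 = 0 := by
            have hmz : ((s1.2 : ℝ) - s0.2) * ((p.1 : ℝ) - s0.1) = 0 := by
              rw [hw1] at *
              linear_combination (-1 : ℝ) * hdet' + ((s2.2 : ℝ) - s0.2) * h1
            rcases mul_eq_zero.mp hmz with h | h
            · exact absurd h h2
            · exact h
          apply Prod.ext
          · simp only [vadd_eq_add, Prod.fst_add, Prod.smul_fst, smul_eq_mul, Prod.fst_sub]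
            rw [hu1, hv1, hw1, h1, mul_zero, zero_add]
            rw [hw1] at hB1
            linarith
          · simp only [vadd_eq_add, Prod.snd_add, Prod.smul_snd, smul_eq_mul, Prod.snd_sub]
            rw [hu2, hv2, hw2, div_mul_cancel₀ _ h2]
            ring
        · refine ⟨((p.1 : ℝ) - s0.1) / ((s1.1 : ℝ) - s0.1), ?_⟩
          apply Prod.ext
          · simp only [vadd_eq_add, Prod.fst_add, Prod.smul_fst, smul_eq_mul, Prod.fst_sub]
            rw [hu1, hv1, hw1, div_mul_cancel₀ _ h1]
            ring
          · simp only [vadd_eq_add, Prod.snd_add, Prod.smul_snd, smul_eq_mul, Prod.snd_sub]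
            rw [hu2, hv2, hw2, hw1]
            rw [div_mul_eq_mul_div, eq_comm, div_add' _ _ _ h1, div_eq_iff h1]
            linear_combination (-1 : ℝ) * hdet'

lemma finish_list {t : ℕ} {P : Set (ℝ × ℝ)} {q : ℤ × ℤ} (l : List (ℤ × ℤ))
    (hlen : l.length = t) (hmem : ∀ p ∈ l, latCast p ∈ P) (hsum : q = l.sum) :
    ∃ c : Fin t → ℤ × ℤ, (∀ i, latCast (c i) ∈ P) ∧ q = ∑ i, c i := by
  subst hlen
  refine ⟨l.get, fun i => hmem _ (l.get_mem i), ?_⟩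
  have h2 : (List.ofFn l.get).sum = ∑ i, l.get i := Fin.sum_ofFn _
  rw [List.ofFn_get] at h2
  rw [hsum, h2]

end LatNormal

open LatNormal in
theorem stmt4 (S : Finset (ℤ × ℤ))
    (hdim : affineSpan ℝ (latCast '' (S : Set (ℤ × ℤ))) = ⊤)
    (P : Set (ℝ × ℝ)) (hP : P = convexHull ℝ (latCast '' (S : Set (ℤ × ℤ))))
    (t : ℕ) (ht : 1 ≤ t)
    (q : ℤ × ℤ) (hq : latCast q ∈ (t : ℝ) • P) :
    ∃ c : Fin t → ℤ × ℤ, (∀ i, latCast (c i) ∈ P) ∧ q = ∑ i, c i := by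
  subst hP
  have hPc : Convex ℝ (convexHull ℝ (latCast '' (S : Set (ℤ × ℤ)))) := convex_convexHull ℝ _
  obtain ⟨y, hy, hyq⟩ := Set.mem_smul_set.mp hq
  obtain ⟨s0, s1, s2, w0, w1, w2, hs0, hs1, hs2, hw0, hw1, hw2, hws, hyw, hguard⟩ :=
    get_weights hy
  have hm0 : latCast s0 ∈ convexHull ℝ (latCast '' (S : Set (ℤ × ℤ))) :=
    subset_convexHull ℝ _ (Set.mem_image_of_mem _ hs0)
  have hm1 : latCast s1 ∈ convexHull ℝ (latCast '' (S : Set (ℤ × ℤ))) :=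
    subset_convexHull ℝ _ (Set.mem_image_of_mem _ hs1)
  have hm2 : latCast s2 ∈ convexHull ℝ (latCast '' (S : Set (ℤ × ℤ))) :=
    subset_convexHull ℝ _ (Set.mem_image_of_mem _ hs2)
  have hy1 : y.1 = w0 * (s0.1 : ℝ) + w1 * (s1.1 : ℝ) + w2 * (s2.1 : ℝ) := by
    rw [hyw]; simp [latCast, Prod.fst_add, Prod.smul_fst]
  have hy2 : y.2 = w0 * (s0.2 : ℝ) + w1 * (s1.2 : ℝ) + w2 * (s2.2 : ℝ) := by
    rw [hyw]; simp [latCast, Prod.snd_add, Prod.smul_snd]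
  have hqy1 : (q.1 : ℝ) = (t : ℝ) * y.1 := by
    have h := congrArg Prod.fst hyq
    simp only [Prod.smul_fst, smul_eq_mul, latCast] at h
    exact h.symm
  have hqy2 : (q.2 : ℝ) = (t : ℝ) * y.2 := by
    have h := congrArg Prod.snd hyq
    simp only [Prod.smul_snd, smul_eq_mul, latCast] at h
    exact h.symm
  set a0 : ℝ := (t : ℝ) * w0 with ha0def
  set a1 : ℝ := (t : ℝ) * w1 with ha1def
  set a2 : ℝ := (t : ℝ) * w2 with ha2def
  have ha0 : 0 ≤ a0 := by positivity
  have ha1 : 0 ≤ a1 := by positivity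
  have ha2 : 0 ≤ a2 := by positivity
  have hq1 : (q.1 : ℝ) = a0 * (s0.1 : ℝ) + a1 * (s1.1 : ℝ) + a2 * (s2.1 : ℝ) := by
    rw [hqy1, hy1, ha0def, ha1def, ha2def]; ring
  have hq2 : (q.2 : ℝ) = a0 * (s0.2 : ℝ) + a1 * (s1.2 : ℝ) + a2 * (s2.2 : ℝ) := by
    rw [hqy2, hy2, ha0def, ha1def, ha2def]; ring
  have hsuma : a0 + a1 + a2 = (t : ℝ) := by
    rw [ha0def, ha1def, ha2def]; linear_combination (t : ℝ) * hws
  set n0 : ℤ := ⌊a0⌋ with hn0def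
  set n1 : ℤ := ⌊a1⌋ with hn1def
  set n2 : ℤ := ⌊a2⌋ with hn2def
  have hn00 : 0 ≤ n0 := Int.floor_nonneg.mpr ha0
  have hn10 : 0 ≤ n1 := Int.floor_nonneg.mpr ha1
  have hn20 : 0 ≤ n2 := Int.floor_nonneg.mpr ha2
  have hf00 : 0 ≤ a0 - (n0 : ℝ) := sub_nonneg.mpr (Int.floor_le a0)
  have hf10 : 0 ≤ a1 - (n1 : ℝ) := sub_nonneg.mpr (Int.floor_le a1)
  have hf20 : 0 ≤ a2 - (n2 : ℝ) := sub_nonneg.mpr (Int.floor_le a2)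
  have hf01 : a0 - (n0 : ℝ) < 1 := by
    have := Int.lt_floor_add_one a0; rw [← hn0def] at this; linarith
  have hf11 : a1 - (n1 : ℝ) < 1 := by
    have := Int.lt_floor_add_one a1; rw [← hn1def] at this; linarith
  have hf21 : a2 - (n2 : ℝ) < 1 := by
    have := Int.lt_floor_add_one a2; rw [← hn2def] at this; linarith
  set M : ℤ := (t : ℤ) - n0 - n1 - n2 with hMdef
  have hMf : (M : ℝ) = (a0 - (n0 : ℝ)) + (a1 - (n1 : ℝ)) + (a2 - (n2 : ℝ)) := by
    rw [hMdef]; push_cast; linarith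
  have hM0 : 0 ≤ M := by
    have h : (0 : ℝ) ≤ (M : ℝ) := by rw [hMf]; linarith
    exact_mod_cast h
  have hM3 : M < 3 := by
    have h : (M : ℝ) < 3 := by rw [hMf]; linarith
    exact_mod_cast h
  set r : ℤ × ℤ := (q.1 - n0 * s0.1 - n1 * s1.1 - n2 * s2.1,
    q.2 - n0 * s0.2 - n1 * s1.2 - n2 * s2.2) with hrdef
  have hr1 : (r.1 : ℝ) = (a0 - (n0 : ℝ)) * (s0.1 : ℝ) + (a1 - (n1 : ℝ)) * (s1.1 : ℝ) +
      (a2 - (n2 : ℝ)) * (s2.1 : ℝ) := by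
    rw [hrdef]; push_cast; rw [hq1]; ring
  have hr2 : (r.2 : ℝ) = (a0 - (n0 : ℝ)) * (s0.2 : ℝ) + (a1 - (n1 : ℝ)) * (s1.2 : ℝ) +
      (a2 - (n2 : ℝ)) * (s2.2 : ℝ) := by
    rw [hrdef]; push_cast; rw [hq2]; ring
  set N0 : ℕ := n0.toNat with hN0def
  set N1 : ℕ := n1.toNat with hN1def
  set N2 : ℕ := n2.toNat with hN2def
  have hN0 : (N0 : ℤ) = n0 := Int.toNat_of_nonneg hn00
  have hN1 : (N1 : ℤ) = n1 := Int.toNat_of_nonneg hn10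
  have hN2 : (N2 : ℤ) = n2 := Int.toNat_of_nonneg hn20
  set L : List (ℤ × ℤ) := List.replicate N0 s0 ++ (List.replicate N1 s1 ++ List.replicate N2 s2)
    with hLdef
  have hLlen : L.length = N0 + (N1 + N2) := by
    rw [hLdef]; simp [List.length_append, List.length_replicate]
  have hLsum : L.sum = (n0 * s0.1 + n1 * s1.1 + n2 * s2.1,
      n0 * s0.2 + n1 * s1.2 + n2 * s2.2) := by
    rw [hLdef, List.sum_append, List.sum_append, repl_sum, repl_sum, repl_sum, hN0, hN1, hN2]
    apply Prod.ext
    · simp only [Prod.fst_add]; ring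
    · simp only [Prod.snd_add]; ring
  have hLmem : ∀ p ∈ L, latCast p ∈ convexHull ℝ (latCast '' (S : Set (ℤ × ℤ))) := by
    intro p hp
    rw [hLdef] at hp
    simp only [List.mem_append, List.mem_replicate] at hp
    rcases hp with ⟨_, rfl⟩ | ⟨_, rfl⟩ | ⟨_, rfl⟩
    · exact hm0
    · exact hm1
    · exact hm2
  have hqLr : q = r + L.sum := by
    rw [hLsum, hrdef]
    apply Prod.ext
    · simp only [Prod.fst_add]; ring
    · simp only [Prod.snd_add]; ring
  have htM : (t : ℤ) = M + n0 + n1 + n2 := by rw [hMdef]; ring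
  rcases (by omega : M = 0 ∨ M = 1 ∨ M = 2) with hM | hM | hM
  · have hz : (M : ℝ) = 0 := by rw [hM]; simp
    have hf0 : a0 - (n0 : ℝ) = 0 := by rw [hz] at hMf; linarith
    have hf1 : a1 - (n1 : ℝ) = 0 := by rw [hz] at hMf; linarith
    have hf2 : a2 - (n2 : ℝ) = 0 := by rw [hz] at hMf; linarith
    have hr0 : r = 0 := by
      apply Prod.ext
      · have : (r.1 : ℝ) = 0 := by rw [hr1, hf0, hf1, hf2]; ring
        exact_mod_cast this
      · have : (r.2 : ℝ) = 0 := by rw [hr2, hf0, hf1, hf2]; ring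
        exact_mod_cast this
    exact finish_list L (by omega) hLmem (by rw [hqLr, hr0, zero_add])
  · have hz : (M : ℝ) = 1 := by rw [hM]; simp
    have hBr : Bary s0 s1 s2 1 (latCast r) :=
      ⟨a0 - (n0 : ℝ), a1 - (n1 : ℝ), a2 - (n2 : ℝ), hf00, hf10, hf20, by linarith, hr1, hr2⟩
    have hrP := bary_mem hPc hm0 hm1 hm2 hBr
    refine finish_list (r :: L) (by simp [hLlen]; omega) ?_ (by rw [List.sum_cons, ← hqLr])
    intro p hp
    rcases List.mem_cons.mp hp with rfl | hp
    · exact hrP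
    · exact hLmem p hp
  · have hdet : dZ (s1 - s0) (s2 - s0) ≠ 0 := by
      rcases hguard with hg | hg
      · exfalso
        have ha2z : a2 = 0 := by rw [ha2def, hg, mul_zero]
        have hf2z : a2 - (n2 : ℝ) = 0 := by
          have : (n2 : ℝ) ≥ 0 := by exact_mod_cast hn20
          linarith
        have h2 : (M : ℝ) = 2 := by rw [hM]; simp
        rw [h2, hf2z] at hMf
        linarith
      · exact hg
    have hz : (M : ℝ) = 2 := by rw [hM]; simp
    have hBr : Bary s0 s1 s2 2 (latCast r) :=
      ⟨a0 - (n0 : ℝ), a1 - (n1 : ℝ), a2 - (n2 : ℝ), hf00, hf10, hf20, by linarith, hr1, hr2⟩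
    obtain ⟨p1, p2, hp1B, hp2B, hreq⟩ :=
      tri (dZ (s1 - s0) (s2 - s0)).natAbs s0 s1 s2 r le_rfl hdet hBr
    have hp1P := bary_mem hPc hm0 hm1 hm2 hp1B
    have hp2P := bary_mem hPc hm0 hm1 hm2 hp2B
    refine finish_list (p1 :: p2 :: L) (by simp [hLlen]; omega) ?_ ?_
    · intro p hp
      rcases List.mem_cons.mp hp with rfl | hp
      · exact hp1P
      rcases List.mem_cons.mp hp with rfl | hp
      · exact hp2P
      · exact hLmem p hp
    · rw [List.sum_cons, List.sum_cons, ← add_assoc, ← hreq, ← hqLr]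
end

section
/- For a Hirzebruch quadrilateral, H_{2a-1, b-1, n} is contained in 2·H_{a,b,n} whenever a, b ≥ 1 and n ≥ 0; moreover H_{2a-1,b-1,n} is a proper subset of 2·H_{a,b,n}. -/
open Pointwise

/-- The Hirzebruch quadrilateral with vertices (0,0), (x,0), (0,y), (x+ny,y). -/
noncomputable def hirzebruch (x y n : ℕ) : Set (ℝ × ℝ) :=
  convexHull ℝ {((0 : ℝ), (0 : ℝ)), ((x : ℝ), 0), (0, (y : ℝ)), (((x : ℝ) + (n : ℝ) * (y : ℝ)), (y : ℝ))}

theorem stmt10 (a b n : ℕ) (ha : 1 ≤ a) (hb : 1 ≤ b) :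
    hirzebruch (2 * a - 1) (b - 1) n ⊂ (2 : ℝ) • hirzebruch a b n := by
  set A : ℝ := (a : ℝ) with hA
  set B : ℝ := (b : ℝ) with hB
  set N : ℝ := (n : ℝ) with hN
  have hA1 : (1 : ℝ) ≤ A := by rw [hA]; exact_mod_cast ha
  have hB1 : (1 : ℝ) ≤ B := by rw [hB]; exact_mod_cast hb
  have hN0 : (0 : ℝ) ≤ N := by positivity
  have hA0 : (0 : ℝ) < A := lt_of_lt_of_le one_pos hA1
  have hB0 : (0 : ℝ) < B := lt_of_lt_of_le one_pos hB1
  have hc1 : ((2 * a - 1 : ℕ) : ℝ) = 2 * A - 1 := by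
    have : (1:ℕ) ≤ 2 * a := by omega
    push_cast [Nat.cast_sub this]; ring
  have hc2 : ((b - 1 : ℕ) : ℝ) = B - 1 := by
    push_cast [Nat.cast_sub hb]; ring
  -- the big set as a convex hull
  have hbig : (2 : ℝ) • hirzebruch a b n =
      convexHull ℝ {((0:ℝ),(0:ℝ)), (2*A, 0), (0, 2*B), (2*A + N*(2*B), 2*B)} := by
    rw [hirzebruch, ← convexHull_smul]
    congr 1
    simp only [Set.smul_set_insert, Set.smul_set_singleton, Prod.smul_mk, smul_eq_mul]
    norm_num
    ring_nf
    rfl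
  rw [hbig, hirzebruch, hc1, hc2]
  set V : Set (ℝ × ℝ) := {((0:ℝ),(0:ℝ)), (2*A, 0), (0, 2*B), (2*A + N*(2*B), 2*B)} with hV
  have hconv : Convex ℝ (convexHull ℝ V) := convex_convexHull ℝ V
  have hv0 : ((0:ℝ),(0:ℝ)) ∈ convexHull ℝ V := subset_convexHull ℝ V (by simp [hV])
  have hv1 : ((2*A : ℝ), (0:ℝ)) ∈ convexHull ℝ V := subset_convexHull ℝ V (by simp [hV])
  have hv2 : ((0:ℝ), (2*B : ℝ)) ∈ convexHull ℝ V := subset_convexHull ℝ V (by simp [hV])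
  have hv3 : ((2*A + N*(2*B) : ℝ), (2*B:ℝ)) ∈ convexHull ℝ V := subset_convexHull ℝ V (by simp [hV])
  -- helper: three-point combinations
  have combo : ∀ (p q r : ℝ) (x y z : ℝ × ℝ), 0 ≤ p → 0 ≤ q → 0 ≤ r → p + q + r = 1 →
      x ∈ convexHull ℝ V → y ∈ convexHull ℝ V → z ∈ convexHull ℝ V →
      p • x + q • y + r • z ∈ convexHull ℝ V := by
    intro p q r x y z hp hq hr hsum hx hy hz
    have := hconv.sum_mem (t := Finset.univ (α := Fin 3))
      (w := ![p, q, r]) (z := ![x, y, z])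
      (by intro i _; fin_cases i <;> simpa)
      (by simp [Fin.sum_univ_three, hsum])
      (by intro i _; fin_cases i <;> simpa)
    simpa [Fin.sum_univ_three] using this
  have hsub : convexHull ℝ {((0 : ℝ), (0 : ℝ)), ((2*A - 1 : ℝ), 0), (0, (B - 1 : ℝ)),
      (((2*A - 1 : ℝ) + N * (B - 1 : ℝ)), (B - 1 : ℝ))} ⊆ convexHull ℝ V := by
    apply convexHull_min _ hconv
    intro v hv
    simp only [Set.mem_insert_iff, Set.mem_singleton_iff] at hv
    rcases hv with h | h | h | h <;> subst h
    · exact hv0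
    · -- (2A-1, 0) = t•(2A,0) + (1-t)•(0,0), t = (2A-1)/(2A)
      have hcm := combo ((2*A-1)/(2*A)) (1/(2*A)) 0 (2*A, 0) (0,0) (0,0)
        (by have : (1:ℝ) ≤ 2*A - 1 := by linarith
            positivity)
        (by positivity) le_rfl (by field_simp; ring) hv1 hv0 hv0
      have heq : ((2*A - 1 : ℝ), (0:ℝ)) = ((2*A-1)/(2*A)) • ((2*A : ℝ), (0:ℝ))
          + (1/(2*A)) • ((0:ℝ),(0:ℝ)) + (0:ℝ) • ((0:ℝ),(0:ℝ)) := by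
        simp only [Prod.smul_mk, Prod.mk_add_mk, smul_eq_mul, Prod.ext_iff]
        constructor
        · field_simp; ring
        · ring
      rw [heq]; exact hcm
    · have hcm := combo ((B-1)/(2*B)) ((B+1)/(2*B)) 0 (0, 2*B) (0,0) (0,0)
        (by have : (0:ℝ) ≤ B - 1 := by linarith
            positivity)
        (by positivity) le_rfl (by field_simp; ring) hv2 hv0 hv0
      have heq : ((0:ℝ), (B - 1 : ℝ)) = ((B-1)/(2*B)) • ((0:ℝ), (2*B : ℝ))
          + ((B+1)/(2*B)) • ((0:ℝ),(0:ℝ)) + (0:ℝ) • ((0:ℝ),(0:ℝ)) := by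
        simp only [Prod.smul_mk, Prod.mk_add_mk, smul_eq_mul, Prod.ext_iff]
        constructor
        · ring
        · field_simp; ring
      rw [heq]; exact hcm
    · -- weights p on (2A,0), q on (2A+2NB,2B), r on (0,0)
      have hp0 : (0:ℝ) ≤ (A*B + A - B)/(2*A*B) := by
        have h1 : B ≤ A*B := by nlinarith
        have : (0:ℝ) ≤ A*B + A - B := by linarith
        positivity
      have hq0 : (0:ℝ) ≤ (B-1)/(2*B) := by
        have : (0:ℝ) ≤ B - 1 := by linarith
        positivity
      have hr0 : (0:ℝ) ≤ 1/(2*A) := by positivity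
      have hsum : (A*B + A - B)/(2*A*B) + (B-1)/(2*B) + 1/(2*A) = 1 := by
        field_simp
        ring
      have hcm := combo ((A*B + A - B)/(2*A*B)) ((B-1)/(2*B)) (1/(2*A))
        (2*A, 0) (2*A + N*(2*B), 2*B) (0,0) hp0 hq0 hr0 hsum hv1 hv3 hv0
      have heq : ((2*A - 1 + N * (B - 1) : ℝ), (B - 1 : ℝ)) =
          ((A*B + A - B)/(2*A*B)) • ((2*A : ℝ), (0:ℝ))
          + ((B-1)/(2*B)) • ((2*A + N*(2*B) : ℝ), (2*B : ℝ))
          + (1/(2*A)) • ((0:ℝ),(0:ℝ)) := by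
        simp only [Prod.smul_mk, Prod.mk_add_mk, smul_eq_mul, Prod.ext_iff]
        constructor
        · field_simp
          ring
        · field_simp; ring
      rw [heq]; exact hcm
  rw [Set.ssubset_iff_of_subset hsub]
  refine ⟨(2*A, 0), hv1, ?_⟩
  -- separating functional f p = p.1 - N * p.2
  intro hmem
  have hlin : IsLinearMap ℝ (fun p : ℝ × ℝ => p.1 - N * p.2) := by
    constructor
    · intro x y; simp; ring
    · intro c x; simp [smul_eq_mul]; ring
  have hhalf : convexHull ℝ {((0 : ℝ), (0 : ℝ)), ((2*A - 1 : ℝ), 0), (0, (B - 1 : ℝ)),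
      (((2*A - 1 : ℝ) + N * (B - 1 : ℝ)), (B - 1 : ℝ))} ⊆ {p : ℝ × ℝ | p.1 - N * p.2 ≤ 2*A - 1} := by
    apply convexHull_min _ (convex_halfSpace_le hlin (2*A - 1))
    intro v hv
    simp only [Set.mem_insert_iff, Set.mem_singleton_iff] at hv
    have hNB : (0:ℝ) ≤ N * (B - 1) := by
      have : (0:ℝ) ≤ B - 1 := by linarith
      positivity
    rcases hv with h | h | h | h <;> subst h <;> simp <;> linarith
  have := hhalf hmem
  simp only [Set.mem_setOf_eq] at this
  linarith
end
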